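/- Let μ > 0 and let h(X) = μ|X|^{4/(3-γ)} with 0 ≤ γ < 3. If μ > τ := ((3-γ)^4/(64(1+γ)))^{1/(3-γ)}, then at every X ≠ 0, Δ_∞ h(X) > h(X)^γ; if μ < τ then Δ_∞ h(X) < h(X)^γ; and if μ = τ then Δ_∞ h(X) = h(X)^γ. -/

import Mathlib

open scoped RealInnerProductSpace

/-- The infinity Laplacian `Δ_∞ u (X) = ⟨D²u(X) · ∇u(X), ∇u(X)⟩`. -/
noncomputable def infinityLaplacian {n : ℕ} (u : EuclideanSpace ℝ (Fin n) → ℝ)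
    (X : EuclideanSpace ℝ (Fin n)) : ℝ :=
  ⟪fderiv ℝ (gradient u) X (gradient u X), gradient u X⟫

section Aux
variable {n : ℕ}

/-- derivative of `Y ↦ ν * (‖Y‖²)^β` at `X ≠ 0`. -/
lemma aux_hasFDeriv_pow_normsq (β ν : ℝ) (X : EuclideanSpace ℝ (Fin n)) (hX : X ≠ 0) :
    HasFDerivAt (fun Y : EuclideanSpace ℝ (Fin n) => ν * (‖Y‖ ^ 2) ^ β)
      ((2 * ν * β * (‖X‖ ^ 2) ^ (β - 1)) • innerSL ℝ X) X := by
  have hpos : (0:ℝ) < ‖X‖ ^ 2 := pow_pos (norm_pos_iff.mpr hX) 2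
  have h1 : HasDerivAt (fun t : ℝ => ν * t ^ β) (ν * (β * (‖X‖^2) ^ (β - 1))) (‖X‖^2) :=
    (Real.hasDerivAt_rpow_const (Or.inl hpos.ne')).const_mul ν
  have h2 : HasFDerivAt (fun Y : EuclideanSpace ℝ (Fin n) => ‖Y‖ ^ 2)
      (2 • innerSL ℝ X) X := (hasStrictFDerivAt_norm_sq X).hasFDerivAt
  have := h1.comp_hasFDerivAt X h2
  refine this.congr_fderiv ?_
  ext y
  simp [smul_smul]
  ring

lemma norm_rpow_eq (α : ℝ) (Y : EuclideanSpace ℝ (Fin n)) :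
    (‖Y‖ ^ 2) ^ (α / 2) = ‖Y‖ ^ α := by
  rw [← Real.rpow_natCast ‖Y‖ 2, ← Real.rpow_mul (norm_nonneg Y)]
  norm_num
  congr 1
  ring

lemma aux_hasGradient (α ν : ℝ) (X : EuclideanSpace ℝ (Fin n)) (hX : X ≠ 0) :
    HasGradientAt (fun Y : EuclideanSpace ℝ (Fin n) => ν * ‖Y‖ ^ α)
      ((ν * α * (‖X‖ ^ 2) ^ ((α - 2) / 2)) • X) X := by
  rw [hasGradientAt_iff_hasFDerivAt]
  have key := aux_hasFDeriv_pow_normsq (n := n) (α / 2) ν X hX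
  have hfun : (fun Y : EuclideanSpace ℝ (Fin n) => ν * (‖Y‖ ^ 2) ^ (α / 2))
      = fun Y => ν * ‖Y‖ ^ α := by
    funext Y; rw [norm_rpow_eq]
  rw [hfun] at key
  refine key.congr_fderiv ?_
  ext y
  simp only [InnerProductSpace.toDual_apply_apply, ContinuousLinearMap.smul_apply, innerSL_apply_apply,
    real_inner_smul_left, smul_eq_mul]
  have : α / 2 - 1 = (α - 2) / 2 := by ring
  rw [this]
  ring


lemma infLap_eq (α ν : ℝ) (X : EuclideanSpace ℝ (Fin n)) (hX : X ≠ 0) :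
    infinityLaplacian (fun Y : EuclideanSpace ℝ (Fin n) => ν * ‖Y‖ ^ α) X
      = ν ^ 3 * α ^ 3 * (α - 1) * ‖X‖ ^ (3 * α - 4) := by
  have ht : (0:ℝ) < ‖X‖ := norm_pos_iff.mpr hX
  set c : EuclideanSpace ℝ (Fin n) → ℝ :=
    fun Y => ν * α * (‖Y‖ ^ 2) ^ ((α - 2) / 2) with hc
  set g : EuclideanSpace ℝ (Fin n) → EuclideanSpace ℝ (Fin n) :=
    fun Y => c Y • Y with hg
  have hgrad : ∀ Y : EuclideanSpace ℝ (Fin n), Y ≠ 0 →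
      gradient (fun Y : EuclideanSpace ℝ (Fin n) => ν * ‖Y‖ ^ α) Y = g Y :=
    fun Y hY => (aux_hasGradient α ν Y hY).gradient
  have heq : gradient (fun Y : EuclideanSpace ℝ (Fin n) => ν * ‖Y‖ ^ α) =ᶠ[nhds X] g :=
    Filter.eventuallyEq_of_mem (compl_singleton_mem_nhds hX)
      (fun Y hY => hgrad Y hY)
  have hc' : HasFDerivAt c
      ((2 * (ν * α) * ((α - 2) / 2) * (‖X‖ ^ 2) ^ ((α - 2) / 2 - 1)) • innerSL ℝ X) X :=
    aux_hasFDeriv_pow_normsq ((α - 2) / 2) (ν * α) X hX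
  have hgD : HasFDerivAt g
      (c X • ContinuousLinearMap.id ℝ (EuclideanSpace ℝ (Fin n)) +
        ((2 * (ν * α) * ((α - 2) / 2) * (‖X‖ ^ 2) ^ ((α - 2) / 2 - 1)) • innerSL ℝ X).smulRight X)
      X := hc'.smul (hasFDerivAt_id X)
  have hfd := heq.fderiv_eq.trans hgD.fderiv
  rw [infinityLaplacian, hfd, hgrad X hX]
  simp only [hg, ContinuousLinearMap.add_apply, ContinuousLinearMap.smul_apply,
    ContinuousLinearMap.id_apply, ContinuousLinearMap.smulRight_apply, innerSL_apply_apply,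
    inner_add_left, real_inner_smul_left, real_inner_smul_right,
    real_inner_self_eq_norm_sq, smul_eq_mul]
  have hA : (‖X‖ ^ 2) ^ ((α - 2) / 2) = ‖X‖ ^ (α - 2) := norm_rpow_eq (α - 2) X
  have hB : (‖X‖ ^ 2) ^ ((α - 2) / 2 - 1) = ‖X‖ ^ (α - 4) := by
    rw [show (α - 2) / 2 - 1 = (α - 4) / 2 by ring]; exact norm_rpow_eq (α - 4) X
  have hQ2 : ‖X‖ ^ (α - 4) * ‖X‖ ^ 2 = ‖X‖ ^ (α - 2) := by
    rw [← Real.rpow_natCast ‖X‖ 2, ← Real.rpow_add ht]; norm_num; congr 1; ring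
  have hT : ‖X‖ ^ (α - 2) * ‖X‖ ^ (α - 2) * ‖X‖ ^ (α - 2) * ‖X‖ ^ 2
      = ‖X‖ ^ (3 * α - 4) := by
    rw [← Real.rpow_natCast ‖X‖ 2, ← Real.rpow_add ht, ← Real.rpow_add ht,
      ← Real.rpow_add ht]
    congr 1; ring
  simp only [hA, hB]
  have hcX : c X = ν * α * ‖X‖ ^ (α - 2) := by rw [hc]; simp only; rw [hA]
  rw [hcX]
  linear_combination (ν ^ 3 * α ^ 3 * (α - 2) * ‖X‖ ^ (α - 2) * ‖X‖ ^ (α - 2) * ‖X‖ ^ 2) * hQ2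
    + (ν ^ 3 * α ^ 3 * (α - 1)) * hT


end Aux

theorem liouville_sharpness_trichotomy
    {n : ℕ} (γ μ τ : ℝ) (hγ0 : 0 ≤ γ) (hγ3 : γ < 3) (hμ : 0 < μ)
    (hτ : τ = ((3 - γ) ^ 4 / (64 * (1 + γ))) ^ ((1 : ℝ) / (3 - γ)))
    (h : EuclideanSpace ℝ (Fin n) → ℝ)
    (hh : ∀ X, h X = μ * ‖X‖ ^ (4 / (3 - γ))) :
    (μ > τ → ∀ X : EuclideanSpace ℝ (Fin n), X ≠ 0 →
      infinityLaplacian h X > (h X) ^ γ) ∧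
    (μ < τ → ∀ X : EuclideanSpace ℝ (Fin n), X ≠ 0 →
      infinityLaplacian h X < (h X) ^ γ) ∧
    (μ = τ → ∀ X : EuclideanSpace ℝ (Fin n), X ≠ 0 →
      infinityLaplacian h X = (h X) ^ γ) := by
  have hs : (0:ℝ) < 3 - γ := by linarith
  have h1γ : (0:ℝ) < 1 + γ := by linarith
  set α : ℝ := 4 / (3 - γ) with hα
  set K : ℝ := α ^ 3 * (α - 1) with hKdef
  have hK : K = 64 * (1 + γ) / (3 - γ) ^ 4 := by
    rw [hKdef, hα]; field_simp; ring
  have hKpos : 0 < K := by rw [hK]; positivity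
  have hbpos : (0:ℝ) < (3 - γ) ^ 4 / (64 * (1 + γ)) := by positivity
  have hτpos : 0 < τ := by rw [hτ]; exact Real.rpow_pos_of_pos hbpos _
  have hτs : τ ^ (3 - γ) = (3 - γ) ^ 4 / (64 * (1 + γ)) := by
    rw [hτ, ← Real.rpow_mul hbpos.le, one_div, inv_mul_cancel₀ hs.ne', Real.rpow_one]
  have hτK : τ ^ (3 - γ) * K = 1 := by
    rw [hτs, hK]; field_simp
  have hμ3 : (μ : ℝ) ^ (3:ℕ) = μ ^ γ * μ ^ (3 - γ) := by
    rw [← Real.rpow_natCast μ 3, ← Real.rpow_add hμ]; norm_num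
  have hexp : 3 * α - 4 = α * γ := by rw [hα]; field_simp; ring
  have hL : ∀ X : EuclideanSpace ℝ (Fin n), X ≠ 0 →
      infinityLaplacian h X = μ ^ γ * (μ ^ (3 - γ) * K) * ‖X‖ ^ (α * γ) := by
    intro X hX
    have hfun : h = fun Y : EuclideanSpace ℝ (Fin n) => μ * ‖Y‖ ^ α := funext hh
    rw [hfun, infLap_eq α μ X hX, hexp, hμ3, hKdef]; ring
  have hR : ∀ X : EuclideanSpace ℝ (Fin n), X ≠ 0 →
      (h X) ^ γ = μ ^ γ * ‖X‖ ^ (α * γ) := by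
    intro X hX
    rw [hh X, Real.mul_rpow hμ.le (Real.rpow_nonneg (norm_nonneg X) _),
      ← Real.rpow_mul (norm_nonneg X)]
  have hμγpos : 0 < μ ^ γ := Real.rpow_pos_of_pos hμ γ
  refine ⟨?_, ?_, ?_⟩
  · intro hlt X hX
    have hP : 0 < ‖X‖ ^ (α * γ) := Real.rpow_pos_of_pos (norm_pos_iff.mpr hX) _
    have : τ ^ (3 - γ) < μ ^ (3 - γ) := Real.rpow_lt_rpow hτpos.le hlt hs
    have h1 : 1 < μ ^ (3 - γ) * K := by
      calc 1 = τ ^ (3 - γ) * K := hτK.symm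
        _ < μ ^ (3 - γ) * K := by exact mul_lt_mul_of_pos_right this hKpos
    rw [hL X hX, hR X hX]
    have : μ ^ γ < μ ^ γ * (μ ^ (3 - γ) * K) := by
      nlinarith
    exact mul_lt_mul_of_pos_right this hP
  · intro hlt X hX
    have hP : 0 < ‖X‖ ^ (α * γ) := Real.rpow_pos_of_pos (norm_pos_iff.mpr hX) _
    have : μ ^ (3 - γ) < τ ^ (3 - γ) := Real.rpow_lt_rpow hμ.le hlt hs
    have h1 : μ ^ (3 - γ) * K < 1 := by
      calc μ ^ (3 - γ) * K < τ ^ (3 - γ) * K := mul_lt_mul_of_pos_right this hKpos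
        _ = 1 := hτK
    rw [hL X hX, hR X hX]
    have : μ ^ γ * (μ ^ (3 - γ) * K) < μ ^ γ := by nlinarith
    exact mul_lt_mul_of_pos_right this hP
  · intro heq X hX
    rw [hL X hX, hR X hX, heq, hτK, mul_one]
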